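/- Let n ≥ 1 and let π be a 321-avoiding permutation of {1,…,n} which is not the identity. Let i_1 < i_2 < ⋯ < i_r be all the excedance locations of π. Then the number of fixed points of π equals (i_1 − 1) + Σ_{j=2}^{r} max{i_j − π(i_{j−1}) − 1, 0} + (n − π(i_r)). -/

import Mathlib

/-- A permutation `π` of `{1,…,n}` (modeled as `Fin n`, so that the index `i ∈ {1,…,n}`
corresponds to the element of `Fin n` with value `i - 1`) is 321-avoiding if there are no
indices `i < j < k` with `π k < π j < π i`. -/
def Avoids321 {n : ℕ} (π : Equiv.Perm (Fin n)) : Prop :=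
  ∀ i j k : Fin n, i < j → j < k → ¬(π k < π j ∧ π j < π i)

private lemma pig_A {n : ℕ} (π : Equiv.Perm (Fin n)) (x : Fin n) (h : π x < x) :
    ∃ i, i < x ∧ x ≤ π i := by
  by_contra hc
  push_neg at hc
  have hmap : ∀ i ∈ Finset.Iic x, π i ∈ Finset.Iio x := by
    intro i hi
    rcases lt_or_eq_of_le (Finset.mem_Iic.mp hi) with hi' | rfl
    · exact Finset.mem_Iio.mpr (hc i hi')
    · exact Finset.mem_Iio.mpr h
  have hcard := Finset.card_le_card_of_injOn π hmap π.injective.injOn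
  rw [Fin.card_Iic, Fin.card_Iio] at hcard
  omega

private lemma pig_B {n : ℕ} (π : Equiv.Perm (Fin n)) (x : Fin n) (h : x < π x) :
    ∃ k, x < k ∧ π k ≤ x := by
  by_contra hc
  push_neg at hc
  have hmap : ∀ i ∈ Finset.Ici x, π i ∈ Finset.Ioi x := by
    intro i hi
    rcases lt_or_eq_of_le (Finset.mem_Ici.mp hi) with hi' | rfl
    · exact Finset.mem_Ioi.mpr (hc i hi')
    · exact Finset.mem_Ioi.mpr h
  have hcard := Finset.card_le_card_of_injOn π hmap π.injective.injOn
  rw [Fin.card_Ici, Fin.card_Ioi] at hcard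
  have := x.isLt
  omega

private lemma pig_C {n : ℕ} (π : Equiv.Perm (Fin n)) (x a : Fin n) (hfix : π x = x)
    (hax : a < x) (hxa : x < π a) : ∃ b, x < b ∧ π b < x := by
  by_contra hc
  push_neg at hc
  have hmap : ∀ i ∈ insert a (Finset.Ici x), π i ∈ Finset.Ici x := by
    intro i hi
    rcases Finset.mem_insert.mp hi with rfl | hi'
    · exact Finset.mem_Ici.mpr (le_of_lt hxa)
    · rcases lt_or_eq_of_le (Finset.mem_Ici.mp hi') with h2 | rfl
      · exact Finset.mem_Ici.mpr (hc i h2)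
      · exact Finset.mem_Ici.mpr hfix.ge
  have hcard := Finset.card_le_card_of_injOn π hmap π.injective.injOn
  rw [Finset.card_insert_of_notMem (by simp [not_le.mpr hax]), Fin.card_Ici] at hcard
  omega

/-- No 321 pattern means: can't have `i < a`, `a` an excedance, with `π a < π i`. -/
private lemma keyD {n : ℕ} {π : Equiv.Perm (Fin n)} (h321 : Avoids321 π) {i a : Fin n}
    (hia : i < a) (ha : a < π a) (hval : π a < π i) : False := by
  obtain ⟨b, hab, hba⟩ := pig_B π a ha
  exact h321 i a b hia hab ⟨lt_of_le_of_lt hba ha, hval⟩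

/-- No 321 pattern means: a fixed point `x` can't have `a < x` with `x < π a`. -/
private lemma keyC {n : ℕ} {π : Equiv.Perm (Fin n)} (h321 : Avoids321 π) {x a : Fin n}
    (hfix : π x = x) (hax : a < x) (hxa : x < π a) : False := by
  obtain ⟨b, hxb, hbx⟩ := pig_C π x a hfix hax hxa
  exact h321 a x b hax hxb ⟨by rw [hfix]; exact hbx, by rw [hfix]; exact hxa⟩

/-- Let `π` be a 321-avoiding permutation of `{1,…,n}` (so `1 ≤ n`), not the identity, and let
`i_1 < i_2 < ⋯ < i_{r+1}` (here `ι 0, …, ι (Fin.last r)`, with `r + 1 ≥ 1`) be all its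
excedance locations.  Then the number of fixed points of `π` equals
`(i_1 − 1) + Σ_{j=2}^{r+1} max{i_j − π(i_{j−1}) − 1, 0} + (n − π(i_{r+1}))`.
In the 0-based model `Fin n`, the 1-based quantity `i_1 − 1` is `(ι 0 : ℕ)`, the 1-based
quantity `i_j − π(i_{j−1}) − 1` is `(ι j.succ : ℕ) - ((π (ι j.castSucc) : ℕ) + 1)` (truncated
subtraction on `ℕ` realizes the `max{·, 0}`), and the 1-based quantity `n − π(i_{r+1})` is
`n - ((π (ι (Fin.last r)) : ℕ) + 1)`. -/
theorem stmt1 (n r : ℕ) (hn : 1 ≤ n) (π : Equiv.Perm (Fin n)) (h321 : Avoids321 π)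
    (hne : π ≠ 1)
    (ι : Fin (r + 1) → Fin n) (hmono : StrictMono ι)
    (hexc : ∀ x : Fin n, x < π x ↔ ∃ j, ι j = x) :
    Nat.card {x : Fin n // π x = x} =
      (ι 0 : ℕ)
        + ∑ j : Fin r, ((ι j.succ : ℕ) - ((π (ι j.castSucc) : ℕ) + 1))
        + (n - ((π (ι (Fin.last r)) : ℕ) + 1)) := by
  classical
  have hexcj : ∀ j, ι j < π (ι j) := fun j => (hexc (ι j)).mpr ⟨j, rfl⟩
  set B : Finset (Fin n) :=
    Finset.univ.biUnion (fun j : Fin r => Finset.Ioo (π (ι j.castSucc)) (ι j.succ)) with hB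
  set G : Finset (Fin n) :=
    (Finset.Iio (ι 0) ∪ B) ∪ Finset.Ioi (π (ι (Fin.last r))) with hG
  have hsuccle : ∀ j : Fin r, j.succ ≤ Fin.last r := by
    intro j; rw [Fin.le_def]; simp
  have hfixG : Finset.univ.filter (fun x => π x = x) = G := by
    ext x
    simp only [Finset.mem_filter, Finset.mem_univ, true_and, hG, hB, Finset.mem_union,
      Finset.mem_biUnion, Finset.mem_Iio, Finset.mem_Ioi, Finset.mem_Ioo]
    constructor
    · intro hfix
      by_cases h0 : x < ι 0
      · exact Or.inl (Or.inl h0)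
      · push_neg at h0
        have h0' : ι 0 < x := by
          rcases lt_or_eq_of_le h0 with h | h
          · exact h
          · exfalso; have := hexcj 0; rw [h, hfix] at this; exact lt_irrefl _ this
        set S : Finset (Fin (r + 1)) := Finset.univ.filter (fun j => ι j < x) with hS
        have hS0 : (0 : Fin (r+1)) ∈ S := by simp [hS, h0']
        have hSne : S.Nonempty := ⟨0, hS0⟩
        obtain ⟨j, hjdef⟩ : ∃ j : Fin (r + 1), j = S.max' hSne := ⟨_, rfl⟩
        have hjx : ι j < x := by
          have := S.max'_mem hSne; rw [← hjdef] at this; simp [hS] at this; exact this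
        have hmax : ∀ k, ι k < x → k ≤ j := by
          intro k hk; rw [hjdef]; exact S.le_max' k (by simp [hS, hk])
        have hπj : π (ι j) < x := by
          rcases lt_trichotomy (π (ι j)) x with h | h | h
          · exact h
          · exfalso; rw [← hfix] at h; exact absurd (π.injective h) (ne_of_lt hjx)
          · exact absurd (keyC h321 hfix hjx h) (fun f => f)
        by_cases hlast : j = Fin.last r
        · exact Or.inr (hlast ▸ hπj)
        · obtain ⟨j', rfl⟩ := Fin.exists_castSucc_eq.mpr hlast
          refine Or.inl (Or.inr ⟨j', hπj, ?_⟩)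
          have h1 : ¬ ι j'.succ < x := by
            intro h
            have := hmax _ h
            rw [Fin.le_def] at this
            simp only [Fin.val_succ, Fin.coe_castSucc] at this
            omega
          push_neg at h1
          rcases lt_or_eq_of_le h1 with h | h
          · exact h
          · exfalso; have := hexcj j'.succ; rw [← h, hfix] at this; exact lt_irrefl _ this
    · intro hx
      have hnex : ¬ x < π x := by
        intro hlt
        obtain ⟨k, hk⟩ := (hexc x).mp hlt
        rcases hx with (h | ⟨j, h1, h2⟩) | h
        · have : ι 0 ≤ ι k := hmono.monotone (Fin.zero_le k)
          rw [hk] at this; exact absurd h (not_lt.mpr this)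
        · have hkj : k ≤ j.castSucc := by
            have := hmono.lt_iff_lt.mp (show ι k < ι j.succ by rw [hk]; exact h2)
            rw [Fin.lt_def] at this
            rw [Fin.le_def]
            simp [Fin.val_succ] at this ⊢
            omega
          have : ι k ≤ ι j.castSucc := hmono.monotone hkj
          rw [hk] at this
          exact absurd (lt_trans (lt_of_le_of_lt this (hexcj j.castSucc)) h1) (lt_irrefl x)
        · have : ι k ≤ ι (Fin.last r) := hmono.monotone (Fin.le_last k)
          rw [hk] at this
          exact absurd (lt_trans (lt_of_le_of_lt this (hexcj (Fin.last r))) h) (lt_irrefl x)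
      have hndef : ¬ π x < x := by
        intro hlt
        obtain ⟨i, hix, hxi⟩ := pig_A π x hlt
        have hie : i < π i := lt_of_lt_of_le hix hxi
        obtain ⟨k, hk⟩ := (hexc i).mp hie
        rcases hx with (h | ⟨j, h1, h2⟩) | h
        · have : ι 0 ≤ ι k := hmono.monotone (Fin.zero_le k)
          rw [hk] at this
          exact absurd (lt_trans (lt_of_le_of_lt this hix) h) (lt_irrefl _)
        · have hkj : k ≤ j.castSucc := by
            have := hmono.lt_iff_lt.mp (show ι k < ι j.succ by rw [hk]; exact lt_trans hix h2)
            rw [Fin.lt_def] at this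
            rw [Fin.le_def]
            simp [Fin.val_succ] at this ⊢
            omega
          have hia : i ≤ ι j.castSucc := hk ▸ hmono.monotone hkj
          rcases lt_or_eq_of_le hia with hia' | heq
          · exact keyD h321 hia' (hexcj j.castSucc) (lt_of_lt_of_le h1 hxi)
          · rw [← heq] at h1; exact absurd (lt_of_lt_of_le h1 hxi) (lt_irrefl _)
        · have hia : i ≤ ι (Fin.last r) := hk ▸ hmono.monotone (Fin.le_last k)
          rcases lt_or_eq_of_le hia with hia' | heq
          · exact keyD h321 hia' (hexcj (Fin.last r)) (lt_of_lt_of_le h hxi)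
          · rw [← heq] at h; exact absurd (lt_of_lt_of_le h hxi) (lt_irrefl _)
      exact le_antisymm (not_lt.mp hnex) (not_lt.mp hndef)
  have hcard1 : Nat.card {x : Fin n // π x = x} = (Finset.univ.filter (fun x => π x = x)).card := by
    rw [Nat.card_eq_fintype_card, Fintype.card_subtype]
  rw [hcard1, hfixG]
  have hd1 : Disjoint (Finset.Iio (ι 0) ∪ B) (Finset.Ioi (π (ι (Fin.last r)))) := by
    rw [Finset.disjoint_left]
    intro y hy hy2
    rw [Finset.mem_Ioi] at hy2
    have hbig : ι (Fin.last r) < y := lt_trans (hexcj (Fin.last r)) hy2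
    rcases Finset.mem_union.mp hy with h | h
    · rw [Finset.mem_Iio] at h
      exact absurd (lt_trans h (lt_of_le_of_lt (hmono.monotone (Fin.zero_le _)) hbig)) (lt_irrefl y)
    · rw [hB, Finset.mem_biUnion] at h
      obtain ⟨j, _, hj⟩ := h
      rw [Finset.mem_Ioo] at hj
      have : ι j.succ ≤ ι (Fin.last r) := hmono.monotone (hsuccle j)
      exact absurd (lt_trans hj.2 (lt_of_le_of_lt this hbig)) (lt_irrefl y)
  have hd2 : Disjoint (Finset.Iio (ι 0)) B := by
    rw [Finset.disjoint_left]
    intro y hy hy2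
    rw [Finset.mem_Iio] at hy
    rw [hB, Finset.mem_biUnion] at hy2
    obtain ⟨j, _, hj⟩ := hy2
    rw [Finset.mem_Ioo] at hj
    have : ι 0 ≤ ι j.castSucc := hmono.monotone (Fin.zero_le _)
    exact absurd (lt_trans hy (lt_of_le_of_lt this (lt_trans (hexcj j.castSucc) hj.1))) (lt_irrefl y)
  have hBcard : B.card = ∑ j : Fin r, ((ι j.succ : ℕ) - ((π (ι j.castSucc) : ℕ) + 1)) := by
    rw [hB, Finset.card_biUnion]
    · refine Finset.sum_congr rfl fun j _ => ?_
      rw [Fin.card_Ioo]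
      omega
    · intro a _ b _ hab
      have key : ∀ p q : Fin r, p < q →
          Disjoint (Finset.Ioo (π (ι p.castSucc)) (ι p.succ)) (Finset.Ioo (π (ι q.castSucc)) (ι q.succ)) := by
        intro p q hpq
        rw [Finset.disjoint_left]
        intro y hy1 hy2
        rw [Finset.mem_Ioo] at hy1 hy2
        have hle : p.succ ≤ q.castSucc := by
          rw [Fin.le_def]; simp [Fin.val_succ]; exact hpq
        have : ι p.succ ≤ ι q.castSucc := hmono.monotone hle
        exact absurd (lt_trans hy1.2 (lt_of_le_of_lt this (lt_trans (hexcj q.castSucc) hy2.1))) (lt_irrefl y)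
      rcases lt_or_gt_of_ne hab with h | h
      · exact key a b h
      · exact (key b a h).symm
  rw [Finset.card_union_of_disjoint hd1, Finset.card_union_of_disjoint hd2, hBcard,
    Fin.card_Iio, Fin.card_Ioi]
  omega
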